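/- For every integer T ≥ 3 and every real δ with 2π ≤ |δ| ≤ πT, the amplitude magnitude obeys the bound |α_T(δ)| ≤ 8π/δ². -/

import Mathlib

/-- The post-QPE amplitude function `α_T(δ) = (√2/T) ∑_{τ=0}^{T-1} sin(π(τ+1/2)/T) e^{iδτ/T}`. -/
noncomputable def amp (T : ℕ) (δ : ℝ) : ℂ :=
  (Real.sqrt 2 / T) * ∑ τ ∈ Finset.range T,
    (Real.sin (Real.pi * (τ + 1 / 2) / T) : ℂ) * Complex.exp (Complex.I * δ * τ / T)

open Complex Real Finset

set_option maxHeartbeats 1000000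

open Complex Real Finset

lemma exp_I_ne_one (c : ℝ) (h1 : 0 < c) (h2 : c < 2 * Real.pi) :
    Complex.exp (Complex.I * c) ≠ 1 := by
  intro h
  rw [Complex.exp_eq_one_iff] at h
  obtain ⟨n, hn⟩ := h
  have : (c : ℂ) = (n : ℂ) * (2 * Real.pi) := by
    have hI : (Complex.I : ℂ) ≠ 0 := Complex.I_ne_zero
    apply mul_left_cancel₀ hI
    rw [hn]; push_cast; ring
  have hr : c = (n : ℝ) * (2 * Real.pi) := by exact_mod_cast this
  rcases lt_trichotomy (n:ℝ) 0 with h | h | h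
  · nlinarith [Real.pi_pos]
  · rw [h] at hr; simp at hr; linarith
  · have : (1:ℝ) ≤ (n:ℝ) := by exact_mod_cast (by exact_mod_cast h : 0 < n)
    nlinarith [Real.pi_pos]

lemma two_I_sin (z : ℂ) : 2 * Complex.I * Complex.sin z = Complex.exp (z*Complex.I) - Complex.exp (-z*Complex.I) := by
  rw [Complex.sin]
  linear_combination (Complex.exp (-z*Complex.I) - Complex.exp (z*Complex.I)) * Complex.I_sq

lemma abs_exp_I_sub_one (θ : ℝ) :
    ‖Complex.exp (Complex.I * θ) - 1‖ = 2 * |Real.sin (θ/2)| := by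
  have key : Complex.exp (Complex.I * θ) - 1
      = Complex.exp (((θ/2 : ℝ) : ℂ) * Complex.I) * (2 * Complex.I * Complex.sin ((θ/2 : ℝ) : ℂ)) := by
    rw [two_I_sin, mul_sub, ← Complex.exp_add, ← Complex.exp_add]
    rw [show ((θ/2:ℝ):ℂ)*Complex.I + ((θ/2:ℝ):ℂ)*Complex.I = Complex.I * θ by push_cast; ring]
    rw [show ((θ/2:ℝ):ℂ)*Complex.I + -((θ/2:ℝ):ℂ)*Complex.I = 0 by ring, Complex.exp_zero]
  rw [key, norm_mul, Complex.norm_exp_ofReal_mul_I, one_mul, norm_mul, norm_mul]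
  rw [← Complex.ofReal_sin, Complex.norm_real, Real.norm_eq_abs]
  simp [Complex.norm_I]

lemma abs_exp_I_add_one (θ : ℝ) :
    ‖Complex.exp (Complex.I * θ) + 1‖ = 2 * |Real.cos (θ/2)| := by
  have key : Complex.exp (Complex.I * θ) + 1
      = Complex.exp (((θ/2 : ℝ) : ℂ) * Complex.I) * (2 * Complex.cos ((θ/2 : ℝ) : ℂ)) := by
    rw [Complex.two_cos, mul_add, ← Complex.exp_add, ← Complex.exp_add]
    rw [show ((θ/2:ℝ):ℂ)*Complex.I + ((θ/2:ℝ):ℂ)*Complex.I = Complex.I * θ by push_cast; ring]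
    rw [show ((θ/2:ℝ):ℂ)*Complex.I + -((θ/2:ℝ):ℂ)*Complex.I = 0 by ring, Complex.exp_zero]
  rw [key, norm_mul, Complex.norm_exp_ofReal_mul_I, one_mul, norm_mul]
  rw [← Complex.ofReal_cos, Complex.norm_real, Real.norm_eq_abs]
  simp


set_option maxHeartbeats 1000000

lemma sqrt2_lt : Real.sqrt 2 < 283/200 := by
  nlinarith [Real.sq_sqrt (by norm_num : (0:ℝ) ≤ 2), Real.sqrt_nonneg 2]

lemma key_ineq (x : ℝ) (h1 : 0 < x) (h2 : x ≤ Real.pi/2) :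
    x^2/4 + Real.sqrt 2/4 * x^2 * Real.cos x ≤ Real.sin x ^ 2 := by
  have hs2 : Real.sqrt 2 < 283/200 := sqrt2_lt
  have hs2' : (0:ℝ) ≤ Real.sqrt 2 := Real.sqrt_nonneg 2
  have hcospos : (0:ℝ) ≤ Real.cos x := Real.cos_nonneg_of_mem_Icc ⟨by linarith [Real.pi_pos], h2⟩
  rcases le_or_gt x 1 with hx1 | hx1
  · -- small case
    have hxx : x^2 ≤ 1 := by nlinarith
    have hsin : x - x^3/4 < Real.sin x := by
      have := Real.sin_gt_sub_cube h1; linarith [pow_pos h1 3]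
    have hsinpos : (0:ℝ) ≤ x - x^3/4 := by nlinarith
    have hsq : (x - x^3/4)^2 ≤ Real.sin x ^ 2 := by nlinarith
    have hsinhalf : x/2 - (x/2)^3/4 < Real.sin (x/2) := by
      have := Real.sin_gt_sub_cube (x := x/2) (by linarith); linarith [pow_pos (by linarith : (0:ℝ) < x/2) 3]
    have hcs := Real.cos_sq (x/2)
    rw [show 2*(x/2) = x by ring] at hcs
    have hpyth := Real.sin_sq_add_cos_sq (x/2)
    have hcos : Real.cos x = 1 - 2 * Real.sin (x/2)^2 := by linarith
    have hhp : (0:ℝ) ≤ x/2 - (x/2)^3/4 := by nlinarith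
    have hcos' : Real.cos x ≤ 1 - 2*(x/2 - (x/2)^3/4)^2 := by nlinarith
    have h1a : (225/256:ℝ) ≤ (1 - x^2/16)^2 := by nlinarith
    have h1b : x/2 - (x/2)^3/4 = x/2 * (1 - x^2/16) := by ring
    have hc2 : Real.cos x ≤ 1 - 43/100 * x^2 := by
      rw [h1b] at hcos'
      nlinarith [mul_le_mul_of_nonneg_left h1a (by positivity : (0:ℝ) ≤ x^2/4)]
    have hcb : (0:ℝ) ≤ 1 - 43/100*x^2 := by nlinarith
    have hA : Real.sqrt 2 * Real.cos x ≤ 283/200*(1 - 43/100*x^2) :=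
      mul_le_mul hs2.le hc2 hcospos (by norm_num)
    have hB : Real.sqrt 2/4 * x^2 * Real.cos x ≤ 283/800 * x^2 * (1 - 43/100*x^2) := by
      calc Real.sqrt 2/4 * x^2 * Real.cos x = x^2/4 * (Real.sqrt 2 * Real.cos x) := by ring
        _ ≤ x^2/4 * (283/200*(1 - 43/100*x^2)) :=
            mul_le_mul_of_nonneg_left hA (by positivity)
        _ = 283/800 * x^2 * (1 - 43/100*x^2) := by ring
    have hpoly2 : x^2/4 + 283/800*x^2*(1 - 43/100*x^2) ≤ (x - x^3/4)^2 := by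
      nlinarith [mul_nonneg (sq_nonneg x) (sub_nonneg.2 hxx), sq_nonneg (x*x*x), sq_nonneg (x*x)]
    linarith [hsq, hB, hpoly2]
  · -- large case
    set t := Real.pi/2 - x with ht
    have htnn : 0 ≤ t := by simp only [ht]; linarith
    have hpi : Real.pi < 3.15 := by linarith [Real.pi_lt_d2]
    have hpi2 : Real.pi > 3.14 := by linarith [Real.pi_gt_d6]
    have htub : t ≤ 23/40 := by simp only [ht]; nlinarith
    have hsin : 1 - t^2/2 ≤ Real.sin x := by
      have hx : Real.sin x = Real.cos t := by rw [ht, Real.cos_pi_div_two_sub]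
      rw [hx]; exact Real.one_sub_sq_div_two_le_cos
    have hcos : Real.cos x ≤ t := by
      have hx : Real.cos x = Real.sin t := by rw [ht, Real.sin_pi_div_two_sub]
      rw [hx]
      rcases eq_or_lt_of_le htnn with h | h
      · rw [← h]; simp
      · exact le_of_lt (Real.sin_lt h)
    have hsp : (0:ℝ) < 1 - t^2/2 := by nlinarith
    have hsq : (1 - t^2/2)^2 ≤ Real.sin x ^ 2 := by nlinarith
    have hxub : x ≤ 63/40 - t := by simp only [ht] at *; nlinarith
    have hx24 : x^2 ≤ (63/40 - t)^2 := by nlinarith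
    have hcost : x^2 * Real.cos x ≤ (63/40 - t)^2 * t :=
      mul_le_mul hx24 hcos hcospos (by positivity)
    have hB : Real.sqrt 2/4 * x^2 * Real.cos x ≤ 283/800 * ((63/40 - t)^2 * t) := by
      calc Real.sqrt 2/4 * x^2 * Real.cos x = Real.sqrt 2/4 * (x^2 * Real.cos x) := by ring
        _ ≤ 283/800 * ((63/40 - t)^2 * t) :=
            mul_le_mul (by linarith) hcost (mul_nonneg (sq_nonneg x) hcospos) (by norm_num)
    have hpoly : (63/40 - t)^2/4 + 283/800 * ((63/40 - t)^2 * t) ≤ (1 - t^2/2)^2 := by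
      nlinarith [sq_nonneg t, sq_nonneg (t - 23/40), mul_nonneg htnn (sub_nonneg.2 htub),
        mul_nonneg (mul_nonneg htnn htnn) (sub_nonneg.2 htub), sq_nonneg (t*t)]
    nlinarith [hsq, hB, hpoly, hx24]


lemma alg_id (p q Q : ℂ) (hp : p ≠ 0) (hm : q/p^2 - 1 ≠ 0) (hpp : q*p^2 - 1 ≠ 0) :
    Complex.I/2 * (p⁻¹*((-Q-1)/(q/p^2-1)) - p*((-Q-1)/(q*p^2-1)))
      = (Q+1)*(q+1)*((p⁻¹-p)*Complex.I/2)/((q/p^2-1)*(q*p^2-1)) := by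
  have hm' : q - p^2 ≠ 0 := by
    intro h
    apply hm
    rw [show q/p^2 - 1 = (q - p^2)/p^2 by field_simp]
    rw [h, zero_div]
  rw [show q/p^2 - 1 = (q - p^2)/p^2 by field_simp]
  have hpp' : p^2*q - 1 ≠ 0 := by rwa [mul_comm]
  field_simp
  ring

lemma sum_closed (T : ℕ) (hT : 3 ≤ T) (δ : ℝ)
    (hm1 : Complex.exp (Complex.I * (((δ - Real.pi)/T : ℝ) : ℂ)) ≠ 1)
    (hp1 : Complex.exp (Complex.I * (((δ + Real.pi)/T : ℝ) : ℂ)) ≠ 1) :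
    ∑ τ ∈ Finset.range T, (Real.sin (Real.pi * (τ + 1 / 2) / T) : ℂ) * Complex.exp (Complex.I * δ * τ / T)
      = (Complex.exp (Complex.I * δ) + 1) * (Complex.exp (Complex.I * ((δ/T : ℝ) : ℂ)) + 1)
          * ((Real.sin (Real.pi/(2*T)) : ℝ) : ℂ)
        / ((Complex.exp (Complex.I * (((δ - Real.pi)/T : ℝ) : ℂ)) - 1)
            * (Complex.exp (Complex.I * (((δ + Real.pi)/T : ℝ) : ℂ)) - 1)) := by
  have hT0 : (T:ℂ) ≠ 0 := by exact_mod_cast (by omega : T ≠ 0)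
  set p : ℂ := Complex.exp (Complex.I * ((Real.pi/(2*T) : ℝ) : ℂ)) with hpdef
  set q : ℂ := Complex.exp (Complex.I * ((δ/T : ℝ) : ℂ)) with hqdef
  set rm : ℂ := Complex.exp (Complex.I * (((δ - Real.pi)/T : ℝ) : ℂ)) with hrmdef
  set rp : ℂ := Complex.exp (Complex.I * (((δ + Real.pi)/T : ℝ) : ℂ)) with hrpdef
  set Q : ℂ := Complex.exp (Complex.I * δ) with hQdef
  have hp0 : p ≠ 0 := Complex.exp_ne_zero _
  have hp20 : p^2 ≠ 0 := pow_ne_zero 2 hp0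
  have hrmq : rm = q / p^2 := by
    rw [eq_div_iff hp20, hpdef, hrmdef, hqdef, sq, ← Complex.exp_add, ← Complex.exp_add]
    congr 1
    push_cast
    ring
  have hrpq : rp = q * p^2 := by
    rw [hpdef, hrpdef, hqdef, sq, ← Complex.exp_add, ← Complex.exp_add]
    congr 1
    push_cast
    ring
  -- per-term identity
  have hterm : ∀ τ ∈ Finset.range T,
      (Real.sin (Real.pi * (τ + 1 / 2) / T) : ℂ) * Complex.exp (Complex.I * δ * τ / T)
        = Complex.I/2 * (p⁻¹ * rm^τ - p * rp^τ) := by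
    intro τ _
    rw [Complex.ofReal_sin, Complex.sin]
    have e1 : Complex.exp (-((Real.pi * ((τ:ℝ) + 1 / 2) / T : ℝ) : ℂ) * Complex.I)
        * Complex.exp (Complex.I * δ * τ / T) = p⁻¹ * rm^τ := by
      rw [hpdef, hrmdef, ← Complex.exp_neg, ← Complex.exp_nat_mul, ← Complex.exp_add,
          ← Complex.exp_add]
      congr 1
      push_cast
      ring
    have e2 : Complex.exp (((Real.pi * ((τ:ℝ) + 1 / 2) / T : ℝ) : ℂ) * Complex.I)
        * Complex.exp (Complex.I * δ * τ / T) = p * rp^τ := by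
      rw [hpdef, hrpdef, ← Complex.exp_nat_mul, ← Complex.exp_add, ← Complex.exp_add]
      congr 1
      push_cast
      ring
    push_cast at e1 e2 ⊢
    linear_combination (Complex.I/2) * e1 - (Complex.I/2) * e2
  rw [Finset.sum_congr rfl hterm, ← Finset.mul_sum, Finset.sum_sub_distrib,
      ← Finset.mul_sum, ← Finset.mul_sum]
  rw [geom_sum_eq hm1 T, geom_sum_eq hp1 T]
  have hrmT : rm^T = -Q := by
    rw [hrmdef, hQdef, ← Complex.exp_nat_mul,
        show (T:ℂ) * (Complex.I * (((δ - Real.pi)/T : ℝ) : ℂ)) = Complex.I * δ - Real.pi * Complex.I by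
          push_cast; field_simp,
        Complex.exp_sub, Complex.exp_pi_mul_I, div_neg, div_one]
  have hrpT : rp^T = -Q := by
    rw [hrpdef, hQdef, ← Complex.exp_nat_mul,
        show (T:ℂ) * (Complex.I * (((δ + Real.pi)/T : ℝ) : ℂ)) = Complex.I * δ + Real.pi * Complex.I by
          push_cast; field_simp,
        Complex.exp_add, Complex.exp_pi_mul_I, mul_neg, mul_one]
  have hsin : ((Real.sin (Real.pi/(2*T)) : ℝ) : ℂ) = (p⁻¹ - p) * Complex.I / 2 := by
    rw [Complex.ofReal_sin, Complex.sin]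
    have hzI : ((Real.pi/(2*(T:ℝ)) : ℝ) : ℂ) * Complex.I = Complex.I * ((Real.pi/(2*T) : ℝ) : ℂ) := by ring
    rw [show -((Real.pi/(2*(T:ℝ)) : ℝ) : ℂ) * Complex.I = -(((Real.pi/(2*(T:ℝ)) : ℝ) : ℂ) * Complex.I) by ring,
        Complex.exp_neg, hzI, ← hpdef]
  rw [hrmT, hrpT, hsin, hrmq, hrpq]
  rw [show (-Q - 1) / (q / p ^ 2 - 1) = (-Q-1)/(q/p^2-1) from rfl]
  exact alg_id p q Q hp0 (by rw [← hrmq]; exact sub_ne_zero_of_ne hm1) (by rw [← hrpq]; exact sub_ne_zero_of_ne hp1)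

lemma main_pos (T : ℕ) (hT : 3 ≤ T) (δ : ℝ)
    (h1 : 2 * Real.pi ≤ δ) (h2 : δ ≤ Real.pi * T) :
    ‖amp T δ‖ ≤ 8 * Real.pi / δ ^ 2 := by
  have hπ : 0 < Real.pi := Real.pi_pos
  have hTr : (3:ℝ) ≤ (T:ℝ) := by exact_mod_cast hT
  have hTr0 : (0:ℝ) < (T:ℝ) := by linarith
  have hδ0 : 0 < δ := by nlinarith
  set x : ℝ := δ/(2*(T:ℝ)) with hxdef
  set h : ℝ := Real.pi/(2*(T:ℝ)) with hhdef
  have hh0 : 0 < h := by positivity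
  have hx0 : 0 < x := by positivity
  have hhx : 2*h ≤ x := by
    rw [hxdef, hhdef, ← sub_nonneg,
        show δ/(2*(T:ℝ)) - 2*(Real.pi/(2*(T:ℝ))) = (δ - 2*Real.pi)/(2*(T:ℝ)) by ring]
    apply div_nonneg (by linarith) (by positivity)
  have hx2 : x ≤ Real.pi/2 := by
    rw [hxdef, div_le_div_iff₀ (by positivity) (by norm_num)]
    nlinarith
  have hh6 : h ≤ Real.pi/6 := by
    rw [hhdef, div_le_div_iff₀ (by positivity) (by norm_num)]
    nlinarith
  have hm1 : Complex.exp (Complex.I * (((δ - Real.pi)/T : ℝ) : ℂ)) ≠ 1 := by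
    apply exp_I_ne_one
    · apply div_pos (by nlinarith) hTr0
    · rw [div_lt_iff₀ hTr0]; nlinarith
  have hp1 : Complex.exp (Complex.I * (((δ + Real.pi)/T : ℝ) : ℂ)) ≠ 1 := by
    apply exp_I_ne_one
    · apply div_pos (by nlinarith) hTr0
    · rw [div_lt_iff₀ hTr0]; nlinarith
  have habs : ‖amp T δ‖
      = Real.sqrt 2/(T:ℝ) * (2*|Real.cos (δ/2)| * (2*|Real.cos (δ/(T:ℝ)/2)|) * |Real.sin (Real.pi/(2*(T:ℝ)))|
          / (2*|Real.sin ((δ-Real.pi)/(T:ℝ)/2)| * (2*|Real.sin ((δ+Real.pi)/(T:ℝ)/2)|))) := by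
    unfold amp
    rw [norm_mul, sum_closed T hT δ hm1 hp1, norm_div, norm_div, norm_mul, norm_mul, norm_mul,
        abs_exp_I_add_one, abs_exp_I_add_one, abs_exp_I_sub_one, abs_exp_I_sub_one,
        Complex.norm_real, Real.norm_eq_abs, Complex.norm_real, Real.norm_eq_abs, Complex.norm_natCast,
        _root_.abs_of_nonneg (Real.sqrt_nonneg 2)]
  rw [habs]
  rw [show δ/(T:ℝ)/2 = x by rw [hxdef]; ring,
      show (δ-Real.pi)/(T:ℝ)/2 = x - h by rw [hxdef, hhdef]; ring,
      show (δ+Real.pi)/(T:ℝ)/2 = x + h by rw [hxdef, hhdef]; ring,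
      show Real.pi/(2*(T:ℝ)) = h from hhdef.symm]
  -- positivity facts
  have hsxm : 0 < Real.sin (x - h) := by
    apply Real.sin_pos_of_pos_of_lt_pi (by linarith) (by linarith)
  have hsxp : 0 < Real.sin (x + h) := by
    apply Real.sin_pos_of_pos_of_lt_pi (by linarith) (by nlinarith)
  have hcx : 0 ≤ Real.cos x := Real.cos_nonneg_of_mem_Icc ⟨by linarith, hx2⟩
  have hsh0 : 0 ≤ Real.sin h := Real.sin_nonneg_of_nonneg_of_le_pi hh0.le (by linarith)
  have hshle : Real.sin h ≤ h := (Real.sin_lt hh0).le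
  have hc1 : |Real.cos (δ/2)| ≤ 1 := Real.abs_cos_le_one _
  rw [_root_.abs_of_nonneg hcx, _root_.abs_of_nonneg hsh0, _root_.abs_of_nonneg hsxm.le, _root_.abs_of_nonneg hsxp.le]
  -- product identity and key bound
  have prodid : Real.sin (x-h) * Real.sin (x+h) = Real.sin x^2 - Real.sin h^2 := by
    rw [Real.sin_add, Real.sin_sub]
    linear_combination (Real.sin x^2) * Real.sin_sq_add_cos_sq h - (Real.sin h^2) * Real.sin_sq_add_cos_sq x
  have hsh2 : Real.sin h^2 ≤ x^2/4 := by nlinarith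
  have hkey := key_ineq x hx0 hx2
  have hBineq : Real.sqrt 2*x^2*Real.cos x ≤ 2*Real.sin (x-h) * (2*Real.sin (x+h)) := by
    nlinarith [prodid, hkey, hsh2]
  -- final computation
  have hδx : δ = 2*(T:ℝ)*x := by rw [hxdef]; field_simp
  have htarget : 8*Real.pi/δ^2 = 2*Real.pi/((T:ℝ)^2*x^2) := by rw [hδx]; ring
  rw [htarget]
  rw [show Real.sqrt 2/(T:ℝ) * (2*|Real.cos (δ/2)| * (2*Real.cos x) * Real.sin h
        / (2*Real.sin (x-h) * (2*Real.sin (x+h))))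
      = (Real.sqrt 2 * (2*|Real.cos (δ/2)| * (2*Real.cos x) * Real.sin h))
        / ((T:ℝ) * (2*Real.sin (x-h) * (2*Real.sin (x+h)))) by ring]
  rw [div_le_div_iff₀ (by positivity) (by positivity)]
  have hA : 2*|Real.cos (δ/2)| * (2*Real.cos x) * Real.sin h ≤ 4*(Real.cos x*h) := by
    nlinarith [mul_nonneg (mul_nonneg (sub_nonneg.2 hc1) hcx) hsh0,
      mul_nonneg hcx (sub_nonneg.2 hshle), abs_nonneg (Real.cos (δ/2))]
  have step1 : Real.sqrt 2 * (2*|Real.cos (δ/2)| * (2*Real.cos x) * Real.sin h) * ((T:ℝ)^2*x^2)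
      ≤ Real.sqrt 2 * (4*(Real.cos x*h)) * ((T:ℝ)^2*x^2) := by
    apply mul_le_mul_of_nonneg_right (mul_le_mul_of_nonneg_left hA (Real.sqrt_nonneg 2)) (by positivity)
  have step2 : Real.sqrt 2 * (4*(Real.cos x*h)) * ((T:ℝ)^2*x^2)
      = 2*Real.pi*((T:ℝ)*(Real.sqrt 2*x^2*Real.cos x)) := by
    rw [hhdef]; field_simp; ring
  have step3 : 2*Real.pi*((T:ℝ)*(Real.sqrt 2*x^2*Real.cos x))
      ≤ 2*Real.pi*((T:ℝ)*(2*Real.sin (x-h) * (2*Real.sin (x+h)))) := by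
    have := mul_le_mul_of_nonneg_left hBineq (by positivity : (0:ℝ) ≤ 2*Real.pi*(T:ℝ))
    nlinarith [this]
  linarith

lemma amp_neg (T : ℕ) (δ : ℝ) : ‖amp T (-δ)‖ = ‖amp T δ‖ := by
  unfold amp
  rw [← Complex.norm_conj (_ * _)]
  congr 1
  rw [map_mul, map_sum]
  congr 1
  · rw [map_div₀, Complex.conj_ofReal, map_natCast]
  · apply Finset.sum_congr rfl
    intro τ _
    rw [map_mul, ← Complex.exp_conj, Complex.conj_ofReal]
    congr 1
    simp only [map_mul, map_div₀, Complex.conj_I, Complex.conj_ofReal, map_natCast]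
    push_cast
    ring

theorem stmt_4 (T : ℕ) (hT : 3 ≤ T) (δ : ℝ)
    (h1 : 2 * Real.pi ≤ |δ|) (h2 : |δ| ≤ Real.pi * T) :
    ‖amp T δ‖ ≤ 8 * Real.pi / δ ^ 2 := by
  rcases abs_cases δ with ⟨he, _⟩ | ⟨he, _⟩
  · rw [he] at h1 h2
    exact main_pos T hT δ h1 h2
  · rw [he] at h1 h2
    have := main_pos T hT (-δ) h1 h2
    rw [amp_neg] at this
    calc ‖amp T δ‖ ≤ 8*Real.pi/(-δ)^2 := this
      _ = 8*Real.pi/δ^2 := by ring_nf
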